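/- Let $\alpha > 0$ and define $s(t) = \alpha\left(\frac{\alpha t}{1 - \alpha t \cot(\alpha t)} + \cot(\alpha t)\right)$ for $t \in (0, \pi/\alpha)$. Then $s$ is finite on $(0, \pi/\alpha)$ and blows up (in absolute value) as $t \to \pi/\alpha$; i.e., $1 - \alpha t\cot(\alpha t) \neq 0$ for $t \in (0, \pi/\alpha)$ and $\lim_{t \to (\pi/\alpha)^-} |s(t)| = +\infty$. -/

import Mathlib

open Real Filter Set

lemma sin_sub_mul_cos_pos {x : ℝ} (hx : x ∈ Ioo (0:ℝ) π) :
    0 < Real.sin x - x * Real.cos x := by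
  have h : StrictMonoOn (fun y => Real.sin y - y * Real.cos y) (Icc 0 π) := by
    apply strictMonoOn_of_deriv_pos (convex_Icc 0 π)
    · fun_prop
    · intro y hy
      rw [interior_Icc] at hy
      have hd : HasDerivAt (fun y => Real.sin y - y * Real.cos y) (y * Real.sin y) y := by
        have := (Real.hasDerivAt_sin y).sub ((hasDerivAt_id y).mul (Real.hasDerivAt_cos y))
        exact this.congr_deriv (by simp only [id]; ring)
      rw [hd.deriv]
      exact mul_pos hy.1 (Real.sin_pos_of_pos_of_lt_pi hy.1 hy.2)
  have := h (left_mem_Icc.2 Real.pi_pos.le) ⟨hx.1.le, hx.2.le⟩ hx.1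
  simpa using this

theorem limiting_comparison_function_blowup (α : ℝ) (hα : 0 < α) :
    let cot : ℝ → ℝ := fun x => Real.cos x / Real.sin x
    let s : ℝ → ℝ := fun t =>
      α * (α * t / (1 - α * t * cot (α * t)) + cot (α * t))
    (∀ t ∈ Ioo (0:ℝ) (π / α), 1 - α * t * cot (α * t) ≠ 0) ∧
    Tendsto (fun t => |s t|) (nhdsWithin (π / α) (Iio (π / α))) atTop := by
  intro cot s
  have hne : ∀ t ∈ Ioo (0:ℝ) (π / α), 1 - α * t * cot (α * t) ≠ 0 := by
    intro t ht
    set x := α * t with hxdef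
    have hx : x ∈ Ioo (0:ℝ) π := by
      constructor
      · exact mul_pos hα ht.1
      · have := (mul_lt_mul_iff_right₀ hα).2 ht.2
        rwa [mul_div_cancel₀ _ hα.ne'] at this
    have hs := Real.sin_pos_of_pos_of_lt_pi hx.1 hx.2
    have hk := sin_sub_mul_cos_pos hx
    have heq : 1 - x * cot x = (Real.sin x - x * Real.cos x) / Real.sin x := by
      simp only [cot]; field_simp
    rw [heq]
    exact ne_of_gt (div_pos hk hs)
  refine ⟨hne, ?_⟩
  set L := nhdsWithin (π / α) (Iio (π / α))
  set M := nhdsWithin π (Iio π)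
  have hmap : Tendsto (fun t => α * t) L M := by
    apply tendsto_nhdsWithin_of_tendsto_nhds_of_eventually_within
    · have : Tendsto (fun t => α * t) (nhds (π / α)) (nhds (α * (π / α))) :=
        (continuous_const.mul continuous_id).tendsto _
      rw [mul_div_cancel₀ _ hα.ne'] at this
      exact this.mono_left nhdsWithin_le_nhds
    · filter_upwards [self_mem_nhdsWithin] with t ht
      have := (mul_lt_mul_iff_right₀ hα).2 ht
      rwa [mul_div_cancel₀ _ hα.ne'] at this
  have hsin : Tendsto Real.sin M (nhdsWithin 0 (Ioi 0)) := by
    apply tendsto_nhdsWithin_of_tendsto_nhds_of_eventually_within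
    · have : Tendsto Real.sin (nhds π) (nhds (Real.sin π)) := Real.continuous_sin.tendsto _
      rw [Real.sin_pi] at this
      exact this.mono_left nhdsWithin_le_nhds
    · filter_upwards [Ioo_mem_nhdsLT_of_mem ⟨Real.pi_pos, le_refl π⟩] with x hx
      exact Real.sin_pos_of_pos_of_lt_pi hx.1 hx.2
  have hinv : Tendsto (fun x => (Real.sin x)⁻¹) M atTop :=
    tendsto_inv_nhdsGT_zero.comp hsin
  have hcos : Tendsto Real.cos M (nhds (-1)) := by
    have : Tendsto Real.cos (nhds π) (nhds (Real.cos π)) := Real.continuous_cos.tendsto _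
    rw [Real.cos_pi] at this
    exact this.mono_left nhdsWithin_le_nhds
  have hcot : Tendsto (fun x => cot x) M atBot := by
    simpa [cot, div_eq_mul_inv] using Tendsto.neg_mul_atTop (by norm_num : (-1:ℝ) < 0) hcos hinv
  have hid : Tendsto (fun x : ℝ => x) M (nhds π) := tendsto_id.mono_left nhdsWithin_le_nhds
  have hxcot : Tendsto (fun x => x * cot x) M atBot :=
    Tendsto.pos_mul_atBot Real.pi_pos hid hcot
  have hD : Tendsto (fun x => 1 - x * cot x) M atTop := by
    have := tendsto_atTop_add_const_left M 1 (tendsto_neg_atBot_atTop.comp hxcot)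
    simpa [sub_eq_add_neg] using this
  have hg : Tendsto (fun x => x / (1 - x * cot x)) M (nhds 0) := by
    have := hid.mul hD.inv_tendsto_atTop
    simpa [div_eq_mul_inv] using this
  have hsum : Tendsto (fun x => x / (1 - x * cot x) + cot x) M atBot :=
    Tendsto.add_atBot (hg) hcot
  have hSB : Tendsto (fun x => α * (x / (1 - x * cot x) + cot x)) M atBot :=
    Tendsto.pos_mul_atBot hα tendsto_const_nhds hsum
  have hs : Tendsto s L atBot := hSB.comp hmap
  exact tendsto_abs_atBot_atTop.comp hs
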